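/- Let A ⊆ {1,…,N} with |A| ≥ γ·N, let γ ∈ (1/2, 1], ℓ ∈ (0, 2·arccos((1−γ)/γ)), and κ > D(Ω)/(γ·sin ℓ − 2(1−γ)·sin(ℓ/2)), and let θ be a Kuramoto solution with D(Θ_A(0)) ≤ ℓ. Then: (1) sup_{t ≥ 0} D(Θ_A(t)) ≤ ℓ and limsup_{t→∞} D(Θ_A(t)) ≤ φ₁ ≤ (3π/(4(2γ−1)))·(D(Ω)/κ), where φ₁ is the unique solution of γ·sin φ − 2(1−γ)·sin(φ/2) = D(Ω)/κ in [0, θ*] with θ* := 2·arccos((1−γ+√((1−γ)²+8γ²))/(4γ)); (2) the full phase diameter stays bounded: sup_{t ≥ 0} D(Θ(t)) < ∞. -/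

import Mathlib

open Set Filter Real

/-- Diameter of a sub-ensemble: `max_{i,j ∈ A} |x i - x j|`. -/
noncomputable def diam {N : ℕ} (A : Finset (Fin N)) (x : Fin N → ℝ) : ℝ :=
  sSup {d : ℝ | ∃ i ∈ A, ∃ j ∈ A, d = |x i - x j|}

section Aux

variable {N : ℕ}

private lemma diam_eq_sup' (A : Finset (Fin N)) (hA : A.Nonempty) (x : Fin N → ℝ) :
    diam A x = (A ×ˢ A).sup' (hA.product hA) (fun p => x p.1 - x p.2) := by
  classical
  have hne : (A ×ˢ A).Nonempty := hA.product hA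
  have hset : {d : ℝ | ∃ i ∈ A, ∃ j ∈ A, d = |x i - x j|}
      = ↑(((A ×ˢ A).image fun p => |x p.1 - x p.2|)) := by
    ext d
    simp only [Set.mem_setOf_eq, Finset.coe_image, Set.mem_image, Finset.mem_coe,
      Finset.mem_product]
    constructor
    · rintro ⟨i, hi, j, hj, rfl⟩; exact ⟨(i, j), ⟨hi, hj⟩, rfl⟩
    · rintro ⟨⟨i, j⟩, ⟨hi, hj⟩, rfl⟩; exact ⟨i, hi, j, hj, rfl⟩
  have himne : (((A ×ˢ A).image fun p => |x p.1 - x p.2|)).Nonempty := hne.image _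
  have h1 : diam A x = ((A ×ˢ A).image fun p => |x p.1 - x p.2|).max' himne := by
    rw [diam, hset, Finset.Nonempty.csSup_eq_max']
  rw [h1, Finset.max'_eq_sup', Finset.sup'_image]
  apply le_antisymm
  · apply Finset.sup'_le
    intro p hp
    obtain ⟨hp1, hp2⟩ := Finset.mem_product.mp hp
    have h2 : (p.1, p.2) ∈ A ×ˢ A := Finset.mem_product.mpr ⟨hp1, hp2⟩
    have h3 : (p.2, p.1) ∈ A ×ˢ A := Finset.mem_product.mpr ⟨hp2, hp1⟩
    have := Finset.le_sup' (f := fun p : Fin N × Fin N => x p.1 - x p.2) (b := (p.1, p.2)) h2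
    have := Finset.le_sup' (f := fun p : Fin N × Fin N => x p.1 - x p.2) (b := (p.2, p.1)) h3
    simp only [Function.comp, id_eq] at *
    rw [abs_sub_le_iff]
    constructor <;> assumption
  · apply Finset.sup'_le
    intro p hp
    exact le_trans (le_abs_self _) (Finset.le_sup' (f := fun p : Fin N × Fin N => |x p.1 - x p.2|) hp)

private lemma sub_le_diam (A : Finset (Fin N)) (x : Fin N → ℝ) {i j : Fin N}
    (hi : i ∈ A) (hj : j ∈ A) : x i - x j ≤ diam A x := by
  rw [diam_eq_sup' A ⟨i, hi⟩ x]
  exact Finset.le_sup' (f := fun p : Fin N × Fin N => x p.1 - x p.2) (b := (i, j))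
    (Finset.mem_product.mpr ⟨hi, hj⟩)

private lemma abs_sub_le_diam (A : Finset (Fin N)) (x : Fin N → ℝ) {i j : Fin N}
    (hi : i ∈ A) (hj : j ∈ A) : |x i - x j| ≤ diam A x := by
  rw [abs_sub_le_iff]
  exact ⟨sub_le_diam A x hi hj, sub_le_diam A x hj hi⟩

private lemma diam_nonneg (A : Finset (Fin N)) (hA : A.Nonempty) (x : Fin N → ℝ) :
    0 ≤ diam A x := by
  obtain ⟨i, hi⟩ := hA
  have := sub_le_diam A x hi hi
  linarith

private lemma diam_le (A : Finset (Fin N)) (hA : A.Nonempty) (x : Fin N → ℝ) {c : ℝ}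
    (h : ∀ i ∈ A, ∀ j ∈ A, x i - x j ≤ c) : diam A x ≤ c := by
  rw [diam_eq_sup' A hA x]
  apply Finset.sup'_le
  intro p hp
  obtain ⟨hp1, hp2⟩ := Finset.mem_product.mp hp
  exact h p.1 hp1 p.2 hp2

end Aux

section Fence

variable {ι : Type*}

private lemma sup'_slope_lt {P : Finset ι} (hP : P.Nonempty) (g : ι → ℝ → ℝ)
    (d : ι → ℝ) (x : ℝ) (hg : ∀ p ∈ P, HasDerivWithinAt (g p) (d p) (Set.Ici x) x)
    {r : ℝ} (hr : ∀ p ∈ P, g p x = P.sup' hP (fun q => g q x) → d p < r) :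
    ∀ᶠ z in nhdsWithin x (Set.Ioi x), slope (fun y => P.sup' hP fun q => g q y) x z < r := by
  classical
  set f := fun y => P.sup' hP fun q => g q y with hf
  have key : ∀ p ∈ P, ∀ᶠ z in nhdsWithin x (Set.Ioi x), g p z - f x < r * (z - x) := by
    intro p hp
    by_cases hpx : g p x = f x
    · have h1 : Filter.Tendsto (slope (g p) x) (nhdsWithin x (Set.Ioi x)) (nhds (d p)) := by
        have h0 := hasDerivWithinAt_iff_tendsto_slope.mp (hg p hp)
        exact h0.mono_left (nhdsWithin_mono x (fun z (hz : x < z) => ⟨Set.mem_Ici.mpr hz.le, ne_of_gt hz⟩))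
      have h2 : ∀ᶠ z in nhdsWithin x (Set.Ioi x), slope (g p) x z < r :=
        h1.eventually_lt_const (hr p hp hpx)
      filter_upwards [h2, self_mem_nhdsWithin] with z hz hz2
      have hzx : (0:ℝ) < z - x := sub_pos.2 hz2
      rw [slope_def_field, div_lt_iff₀ hzx] at hz
      calc g p z - f x = g p z - g p x := by rw [hpx]
        _ < r * (z - x) := hz
    · have hlt : g p x < f x :=
        lt_of_le_of_ne (Finset.le_sup' (fun q => g q x) hp) hpx
      have hε0 : (0:ℝ) < (f x - g p x) / 2 := by linarith
      have hcont : Filter.Tendsto (g p) (nhdsWithin x (Set.Ioi x)) (nhds (g p x)) :=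
        ((hg p hp).continuousWithinAt).mono_left
          (nhdsWithin_mono x (fun z (hz : x < z) => Set.mem_Ici.mpr hz.le))
      have h1 : ∀ᶠ z in nhdsWithin x (Set.Ioi x), g p z < g p x + (f x - g p x) / 2 :=
        hcont.eventually_lt_const (by linarith)
      have h2 : Filter.Tendsto (fun z => r * (z - x)) (nhdsWithin x (Set.Ioi x)) (nhds 0) := by
        have : Filter.Tendsto (fun z : ℝ => r * (z - x)) (nhds x) (nhds (r * (x - x))) :=
          (continuous_const.mul (continuous_id.sub continuous_const)).tendsto x
        simp only [sub_self, mul_zero] at this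
        exact this.mono_left nhdsWithin_le_nhds
      have h3 : ∀ᶠ z in nhdsWithin x (Set.Ioi x), -((f x - g p x) / 2) < r * (z - x) :=
        h2.eventually_const_lt (by linarith)
      filter_upwards [h1, h3] with z hz1 hz3
      linarith
  have key2 := (Filter.eventually_all_finset P).mpr key
  filter_upwards [key2, self_mem_nhdsWithin] with z hz hz2
  have hzx : (0:ℝ) < z - x := sub_pos.2 hz2
  have hfz : f z < f x + r * (z - x) := by
    rw [hf]
    apply (Finset.sup'_lt_iff hP).mpr
    intro p hp
    linarith [hz p hp]
  rw [slope_def_field, div_lt_iff₀ hzx]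
  linarith

private lemma sup'_le_linear {P : Finset ι} (hP : P.Nonempty) (g : ι → ℝ → ℝ)
    (d : ι → ℝ → ℝ) {a b C m : ℝ}
    (hg : ∀ p ∈ P, ∀ x ∈ Set.Icc a b, HasDerivWithinAt (g p) (d p x) (Set.Ici x) x)
    (hcont : ∀ p ∈ P, ContinuousOn (g p) (Set.Icc a b))
    (h0 : (P.sup' hP fun p => g p a) ≤ C)
    (hbd : ∀ x ∈ Set.Ico a b, (P.sup' hP fun p => g p x) = C + m * (x - a) →
      ∀ p ∈ P, g p x = C + m * (x - a) → d p x < m) :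
    ∀ x ∈ Set.Icc a b, (P.sup' hP fun p => g p x) ≤ C + m * (x - a) := by
  classical
  set f := fun y => P.sup' hP fun q => g q y with hf
  have hfilt : ∀ x : ℝ, ((P.filter fun p => g p x = f x).image fun p => d p x).Nonempty := by
    intro x
    obtain ⟨p, hp, hpx⟩ := Finset.exists_mem_eq_sup' hP (fun q => g q x)
    exact ⟨d p x, Finset.mem_image.mpr ⟨p, Finset.mem_filter.mpr ⟨hp, hpx.symm⟩, rfl⟩⟩
  set f' : ℝ → ℝ := fun x => ((P.filter fun p => g p x = f x).image fun p => d p x).max' (hfilt x)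
    with hf'
  have hf'lt : ∀ x r, (∀ p ∈ P, g p x = f x → d p x < r) → f' x < r := by
    intro x r h
    have he : f' x = ((P.filter fun p => g p x = f x).image fun p => d p x).max' (hfilt x) := rfl
    rw [he]
    apply (Finset.max'_lt_iff _ (hfilt x)).mpr
    intro y hy
    obtain ⟨p, hp, rfl⟩ := Finset.mem_image.mp hy
    obtain ⟨hp1, hp2⟩ := Finset.mem_filter.mp hp
    exact h p hp1 hp2
  have hf'ge : ∀ x r, f' x < r → ∀ p ∈ P, g p x = f x → d p x < r := by
    intro x r hx p hp hpx
    have hle : d p x ≤ ((P.filter fun p => g p x = f x).image fun p => d p x).max' (hfilt x) :=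
      Finset.le_max' ((P.filter fun p => g p x = f x).image fun p => d p x) (d p x)
        (Finset.mem_image.mpr ⟨p, Finset.mem_filter.mpr ⟨hp, hpx⟩, rfl⟩)
    have he : f' x = ((P.filter fun p => g p x = f x).image fun p => d p x).max' (hfilt x) := rfl
    rw [he] at hx
    linarith
  intro x hx
  have hB' : ∀ y, HasDerivAt (fun z => C + m * (z - a)) m y := by
    intro y
    have := (((hasDerivAt_id y).sub_const a).const_mul m).const_add C
    simpa using this
  have := image_le_of_liminf_slope_right_lt_deriv_boundary
    (f := f) (f' := f') (a := a) (b := b) (B := fun z => C + m * (z - a)) (B' := fun _ => m)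
    ?_ ?_ ?_ (fun y => hB' y) ?_ hx
  · exact this
  · exact ContinuousOn.finset_sup'_apply hP (fun p hp => hcont p hp)
  · intro y hy r hr
    have hslope := sup'_slope_lt hP g (fun p => d p y) y
      (fun p hp => hg p hp y (Set.Ico_subset_Icc_self hy)) (hf'ge y r hr)
    exact hslope.frequently
  · show f a ≤ C + m * (a - a)
    rw [show C + m * (a - a) = C by ring]
    exact h0
  · intro y hy hfy
    apply hf'lt
    intro p hp hpy
    exact hbd y hy hfy p hp (hpy.trans hfy)

end Fence

private lemma sin_concave_bd {lam w : ℝ} (hw0 : 0 ≤ w) (hwl : w ≤ lam) (hlp : lam ≤ π) :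
    Real.sin (w - lam) - Real.sin w ≤ -Real.sin lam := by
  have h1 : 0 ≤ Real.sin (lam - w) :=
    Real.sin_nonneg_of_nonneg_of_le_pi (by linarith) (by linarith)
  have h2 : 0 ≤ Real.sin w := Real.sin_nonneg_of_nonneg_of_le_pi hw0 (by linarith)
  have h3 : Real.cos w ≤ 1 := Real.cos_le_one w
  have h4 : Real.cos (lam - w) ≤ 1 := Real.cos_le_one _
  have h5 : Real.sin lam = Real.sin (lam - w) * Real.cos w + Real.cos (lam - w) * Real.sin w := by
    rw [show lam = (lam - w) + w by ring, Real.sin_add]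
    ring_nf
  have h6 : Real.sin (w - lam) = -Real.sin (lam - w) := by
    rw [show w - lam = -(lam - w) by ring, Real.sin_neg]
  nlinarith [mul_le_of_le_one_right h1 h3, mul_le_of_le_one_right h2 h4]

private lemma sin_shift_bd {lam : ℝ} (w : ℝ) (hl0 : 0 ≤ lam) (hlp : lam ≤ π) :
    Real.sin (w - lam) - Real.sin w ≤ 2 * Real.sin (lam / 2) := by
  have key : Real.sin (w - lam) - Real.sin w
      = -2 * Real.sin (lam / 2) * Real.cos ((w - lam + w) / 2) := by
    rw [Real.sin_sub_sin, show (w - lam - w) / 2 = -(lam / 2) by ring, Real.sin_neg]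
    ring
  have h1 : 0 ≤ Real.sin (lam / 2) :=
    Real.sin_nonneg_of_nonneg_of_le_pi (by linarith) (by linarith [Real.pi_pos])
  nlinarith [Real.neg_one_le_cos ((w - lam + w) / 2), Real.cos_le_one ((w - lam + w) / 2)]

private lemma key_bound {N : ℕ} {κ γ : ℝ} (hNpos : (0:ℝ) < N) (hκpos : 0 < κ)
    (ν : Fin N → ℝ) (A : Finset (Fin N)) (hcard : γ * N ≤ (A.card : ℝ))
    {x : Fin N → ℝ} {lam : ℝ} (hlam0 : 0 ≤ lam) (hlamπ : lam ≤ Real.pi)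
    {i j : Fin N} {n : ℤ} (hij : x i - x j = lam + 2 * Real.pi * n)
    (hcase : (∀ k ∈ A, x k - x j ∈ Set.Icc 0 lam) ∨ (∀ k ∈ A, x i - x k ∈ Set.Icc 0 lam)) :
    (ν i + κ / N * ∑ k, Real.sin (x k - x i)) - (ν j + κ / N * ∑ k, Real.sin (x k - x j))
      ≤ diam Finset.univ ν - κ * (γ * Real.sin lam - 2 * (1 - γ) * Real.sin (lam / 2)) := by
  classical
  have hνij : ν i - ν j ≤ diam Finset.univ ν :=
    sub_le_diam Finset.univ ν (Finset.mem_univ i) (Finset.mem_univ j)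
  have hterm : ∀ k, Real.sin (x k - x i) - Real.sin (x k - x j)
      ≤ (if k ∈ A then -Real.sin lam else 2 * Real.sin (lam / 2)) := by
    intro k
    by_cases hk : k ∈ A
    · simp only [hk, if_true]
      rcases hcase with hL | hR
      · obtain ⟨h1, h2⟩ := hL k hk
        have e2 : Real.sin (x k - x i) = Real.sin ((x k - x j) - lam) := by
          rw [show x k - x i = ((x k - x j) - lam) - n * (2 * π) from by linear_combination -hij,
            Real.sin_sub_int_mul_two_pi]
        rw [e2]
        exact sin_concave_bd h1 h2 hlamπ
      · obtain ⟨h1, h2⟩ := hR k hk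
        have e2 : Real.sin (x k - x i) = Real.sin ((lam - (x i - x k)) - lam) := by
          congr 1; ring
        have e3 : Real.sin (x k - x j) = Real.sin (lam - (x i - x k)) := by
          rw [show x k - x j = (lam - (x i - x k)) + n * (2 * π) from by linear_combination hij,
            Real.sin_add_int_mul_two_pi]
        rw [e2, e3]
        exact sin_concave_bd (by linarith) (by linarith) hlamπ
    · simp only [hk, if_false]
      have e2 : Real.sin (x k - x i) = Real.sin ((x k - x j) - lam) := by
        rw [show x k - x i = ((x k - x j) - lam) - n * (2 * π) from by linear_combination -hij,
          Real.sin_sub_int_mul_two_pi]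
      rw [e2]
      exact sin_shift_bd _ hlam0 hlamπ
  have hAN : (A.card : ℝ) ≤ (N : ℝ) := by
    have := Finset.card_le_univ A
    have h2 : A.card ≤ N := by simpa using this
    exact_mod_cast h2
  have hsum : ∑ k, (Real.sin (x k - x i) - Real.sin (x k - x j))
      ≤ (A.card : ℝ) * (-Real.sin lam) + ((N : ℝ) - A.card) * (2 * Real.sin (lam / 2)) := by
    calc ∑ k, (Real.sin (x k - x i) - Real.sin (x k - x j))
        ≤ ∑ k, (if k ∈ A then -Real.sin lam else 2 * Real.sin (lam / 2)) :=
          Finset.sum_le_sum (fun k _ => hterm k)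
      _ = (A.card : ℝ) * (-Real.sin lam) + ((N : ℝ) - A.card) * (2 * Real.sin (lam / 2)) := by
          rw [Finset.sum_ite, Finset.sum_const, Finset.sum_const]
          have e1 : Finset.univ.filter (fun k => k ∈ A) = A := by
            ext k; simp
          have e2 : (Finset.univ.filter (fun k => ¬ k ∈ A)).card = N - A.card := by
            rw [Finset.filter_not]
            simp [Finset.card_sdiff_of_subset (Finset.subset_univ A)]
          rw [e1, e2, nsmul_eq_mul, nsmul_eq_mul,
            Nat.cast_sub (show A.card ≤ N by simpa using Finset.card_le_univ A)]
  have hsin0 : 0 ≤ Real.sin lam := Real.sin_nonneg_of_nonneg_of_le_pi hlam0 hlamπ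
  have hsin20 : 0 ≤ Real.sin (lam / 2) :=
    Real.sin_nonneg_of_nonneg_of_le_pi (by linarith) (by linarith [Real.pi_pos])
  have hmain : κ / N * (∑ k, Real.sin (x k - x i) - ∑ k, Real.sin (x k - x j))
      ≤ -(κ * (γ * Real.sin lam - 2 * (1 - γ) * Real.sin (lam / 2))) := by
    rw [← Finset.sum_sub_distrib]
    have h2 : (A.card : ℝ) * (-Real.sin lam) + ((N : ℝ) - A.card) * (2 * Real.sin (lam / 2))
        ≤ (N : ℝ) * (2 * (1 - γ) * Real.sin (lam / 2) - γ * Real.sin lam) := by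
      nlinarith [mul_nonneg (sub_nonneg.2 hcard)
        (by positivity : (0:ℝ) ≤ 2 * Real.sin (lam / 2) + Real.sin lam)]
    calc κ / N * (∑ k, (Real.sin (x k - x i) - Real.sin (x k - x j)))
        ≤ κ / N * ((N : ℝ) * (2 * (1 - γ) * Real.sin (lam / 2) - γ * Real.sin lam)) := by
          apply mul_le_mul_of_nonneg_left (le_trans hsum h2) (by positivity)
      _ = -(κ * (γ * Real.sin lam - 2 * (1 - γ) * Real.sin (lam / 2))) := by
          field_simp
          ring
  have hLHS : (ν i + κ / N * ∑ k, Real.sin (x k - x i))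
      - (ν j + κ / N * ∑ k, Real.sin (x k - x j))
      = (ν i - ν j) + κ / N * (∑ k, Real.sin (x k - x i) - ∑ k, Real.sin (x k - x j)) := by
    ring
  rw [hLHS]
  linarith

private noncomputable def cstar (γ : ℝ) : ℝ :=
  (1 - γ + Real.sqrt ((1 - γ) ^ 2 + 8 * γ ^ 2)) / (4 * γ)

private noncomputable def Ff (γ : ℝ) : ℝ → ℝ :=
  fun z => γ * Real.sin z - 2 * (1 - γ) * Real.sin (z / 2)

section Fanal

variable {γ : ℝ} (hγ1 : 1 / 2 < γ) (hγ2 : γ ≤ 1)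

private lemma sqrt_sq' : (Real.sqrt ((1 - γ) ^ 2 + 8 * γ ^ 2)) ^ 2 = (1 - γ) ^ 2 + 8 * γ ^ 2 :=
  Real.sq_sqrt (by positivity)

private lemma sqrt_nn : 0 ≤ Real.sqrt ((1 - γ) ^ 2 + 8 * γ ^ 2) := Real.sqrt_nonneg _

private lemma sqrt_ge_beta (hγ2 : γ ≤ 1) : 1 - γ ≤ Real.sqrt ((1 - γ) ^ 2 + 8 * γ ^ 2) := by
  have h1 : Real.sqrt ((1 - γ) ^ 2) ≤ Real.sqrt ((1 - γ) ^ 2 + 8 * γ ^ 2) :=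
    Real.sqrt_le_sqrt (by nlinarith)
  rwa [Real.sqrt_sq (by linarith : 0 ≤ 1 - γ)] at h1

private lemma cstar_root (hγ1 : 1 / 2 < γ) : 2 * γ * (cstar γ) ^ 2 - (1 - γ) * cstar γ - γ = 0 := by
  have h0 : (0:ℝ) < γ := by linarith
  have hs := sqrt_sq' (γ := γ)
  rw [cstar]
  field_simp
  nlinarith [hs, Real.sq_sqrt (show (0:ℝ) ≤ (1 - γ) ^ 2 + γ ^ 2 * 8 by positivity)]

private lemma cstar_lb (hγ1 : 1 / 2 < γ) (hγ2 : γ ≤ 1) : Real.sqrt 2 / 2 ≤ cstar γ := by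
  have h0 : (0:ℝ) < γ := by linarith
  have h1 : Real.sqrt (8 * γ ^ 2) ≤ Real.sqrt ((1 - γ) ^ 2 + 8 * γ ^ 2) :=
    Real.sqrt_le_sqrt (by nlinarith)
  have h2 : Real.sqrt (8 * γ ^ 2) = 2 * Real.sqrt 2 * γ := by
    rw [show (8:ℝ) * γ ^ 2 = (2 * Real.sqrt 2 * γ) ^ 2 by
      have := Real.sq_sqrt (by norm_num : (0:ℝ) ≤ 2); nlinarith]
    exact Real.sqrt_sq (by positivity)
  have h3 : 2 * Real.sqrt 2 * γ ≤ 1 - γ + Real.sqrt ((1 - γ) ^ 2 + 8 * γ ^ 2) := by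
    rw [← h2]; linarith
  rw [cstar, le_div_iff₀ (by positivity)]
  nlinarith [h3, Real.sqrt_nonneg 2]

private lemma cstar_lt_one (hγ1 : 1 / 2 < γ) (hγ2 : γ ≤ 1) : cstar γ < 1 := by
  have h0 : (0:ℝ) < γ := by linarith
  have hs := sqrt_sq' (γ := γ)
  have hs0 := sqrt_nn (γ := γ)
  have h51 : (0:ℝ) < 5 * γ - 1 := by linarith
  have h1 : Real.sqrt ((1 - γ) ^ 2 + 8 * γ ^ 2) < 5 * γ - 1 := by
    nlinarith [hs, hs0, h51]
  rw [cstar, div_lt_one (by positivity)]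
  linarith

private lemma cstar_pos (hγ1 : 1 / 2 < γ) (hγ2 : γ ≤ 1) : 0 < cstar γ :=
  lt_of_lt_of_le (by positivity : (0:ℝ) < Real.sqrt 2 / 2) (cstar_lb hγ1 hγ2)

private lemma cstar_sq (hγ1 : 1 / 2 < γ) (hγ2 : γ ≤ 1) : 1 ≤ 2 * (cstar γ) ^ 2 := by
  have h1 := cstar_lb hγ1 hγ2
  have h2 : (0:ℝ) ≤ Real.sqrt 2 / 2 := by positivity
  have h3 := Real.sq_sqrt (by norm_num : (0:ℝ) ≤ 2)
  nlinarith [h1, h2, h3]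

private lemma cstar_2g (hγ1 : 1 / 2 < γ) (hγ2 : γ ≤ 1) : 1 - γ ≤ 2 * γ * cstar γ := by
  have h0 : (0:ℝ) < γ := by linarith
  have h1 : 2 * γ * cstar γ = (1 - γ + Real.sqrt ((1 - γ) ^ 2 + 8 * γ ^ 2)) / 2 := by
    rw [cstar]; field_simp; ring
  rw [h1]
  linarith [sqrt_ge_beta (γ := γ) hγ2]

private lemma Ff_hasDeriv (x : ℝ) :
    HasDerivAt (Ff γ) (γ * Real.cos x - (1 - γ) * Real.cos (x / 2)) x := by
  have h2 : HasDerivAt (fun z : ℝ => z / 2) (1 / 2 : ℝ) x := (hasDerivAt_id x).div_const 2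
  have h3 : HasDerivAt (fun z : ℝ => Real.sin (z / 2)) (Real.cos (x / 2) * (1 / 2)) x :=
    by have := (Real.hasDerivAt_sin (x / 2)).comp x h2; exact this
  have h4 := ((Real.hasDerivAt_sin x).const_mul γ).sub (h3.const_mul (2 * (1 - γ)))
  exact h4.congr_deriv (by ring)

private lemma Ff_deriv_sign_pos (hγ1 : 1 / 2 < γ) (hγ2 : γ ≤ 1) {x : ℝ} (hx0 : 0 ≤ x)
    (hx : x < 2 * Real.arccos (cstar γ)) : 0 < γ * Real.cos x - (1 - γ) * Real.cos (x / 2) := by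
  have h0 : (0:ℝ) < γ := by linarith
  have hc1 := cstar_lt_one hγ1 hγ2
  have hc0 := cstar_pos hγ1 hγ2
  have hroot := cstar_root hγ1
  have h2g := cstar_2g hγ1 hγ2
  have hale : Real.arccos (cstar γ) ≤ π := Real.arccos_le_pi _
  have hclt : cstar γ < Real.cos (x / 2) := by
    have h1 : Real.cos (Real.arccos (cstar γ)) < Real.cos (x / 2) :=
      Real.cos_lt_cos_of_nonneg_of_le_pi (by linarith) hale (by linarith)
    rwa [Real.cos_arccos (by linarith) hc1.le] at h1
  have hcosx : Real.cos x = 2 * (Real.cos (x / 2)) ^ 2 - 1 := by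
    rw [show x = 2 * (x / 2) by ring, Real.cos_two_mul, show 2 * (x / 2) / 2 = x / 2 by ring]
  rw [hcosx]
  have hfac : 0 < 2 * γ * (Real.cos (x / 2) + cstar γ) - (1 - γ) := by nlinarith
  nlinarith [mul_pos (sub_pos.2 hclt) hfac]

private lemma Ff_deriv_sign_neg (hγ1 : 1 / 2 < γ) (hγ2 : γ ≤ 1) {x : ℝ}
    (hx : 2 * Real.arccos (cstar γ) < x) (hxπ : x < π) :
    γ * Real.cos x - (1 - γ) * Real.cos (x / 2) < 0 := by
  have h0 : (0:ℝ) < γ := by linarith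
  have hc1 := cstar_lt_one hγ1 hγ2
  have hc0 := cstar_pos hγ1 hγ2
  have hroot := cstar_root hγ1
  have h2g := cstar_2g hγ1 hγ2
  have ha0 : 0 ≤ Real.arccos (cstar γ) := Real.arccos_nonneg _
  have hclt : Real.cos (x / 2) < cstar γ := by
    have h1 : Real.cos (x / 2) < Real.cos (Real.arccos (cstar γ)) :=
      Real.cos_lt_cos_of_nonneg_of_le_pi ha0 (by linarith [Real.pi_pos]) (by linarith)
    rwa [Real.cos_arccos (by linarith) hc1.le] at h1
  have hcpos : 0 < Real.cos (x / 2) :=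
    Real.cos_pos_of_mem_Ioo ⟨by linarith [Real.pi_pos, ha0], by linarith [Real.pi_pos]⟩
  have hcosx : Real.cos x = 2 * (Real.cos (x / 2)) ^ 2 - 1 := by
    rw [show x = 2 * (x / 2) by ring, Real.cos_two_mul, show 2 * (x / 2) / 2 = x / 2 by ring]
  rw [hcosx]
  have hfac : 0 < 2 * γ * (Real.cos (x / 2) + cstar γ) - (1 - γ) := by nlinarith
  nlinarith [mul_pos (sub_pos.2 hclt) hfac]

private lemma Ff_cont : Continuous (Ff γ) := by
  unfold Ff
  fun_prop

private lemma Ff_mono (hγ1 : 1 / 2 < γ) (hγ2 : γ ≤ 1) :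
    StrictMonoOn (Ff γ) (Set.Icc 0 (2 * Real.arccos (cstar γ))) := by
  apply strictMonoOn_of_deriv_pos (convex_Icc _ _) (Ff_cont.continuousOn)
  intro x hx
  rw [interior_Icc] at hx
  rw [(Ff_hasDeriv x).deriv]
  exact Ff_deriv_sign_pos hγ1 hγ2 hx.1.le hx.2

private lemma Ff_anti (hγ1 : 1 / 2 < γ) (hγ2 : γ ≤ 1) {l : ℝ} (hl : l < π) :
    StrictAntiOn (Ff γ) (Set.Icc (2 * Real.arccos (cstar γ)) l) := by
  apply strictAntiOn_of_deriv_neg (convex_Icc _ _) (Ff_cont.continuousOn)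
  intro x hx
  rw [interior_Icc] at hx
  rw [(Ff_hasDeriv x).deriv]
  exact Ff_deriv_sign_neg hγ1 hγ2 hx.1 (lt_of_lt_of_le hx.2 hl.le)

private lemma arccos_cstar_le (hγ1 : 1 / 2 < γ) (hγ2 : γ ≤ 1) :
    Real.arccos (cstar γ) ≤ π / 4 := by
  by_contra h
  push_neg at h
  have h1 : Real.cos (Real.arccos (cstar γ)) < Real.cos (π / 4) :=
    Real.cos_lt_cos_of_nonneg_of_le_pi (by positivity) (Real.arccos_le_pi _) h
  rw [Real.cos_arccos (by linarith [cstar_pos hγ1 hγ2]) (cstar_lt_one hγ1 hγ2).le,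
    Real.cos_pi_div_four] at h1
  linarith [cstar_lb hγ1 hγ2]

end Fanal

set_option maxHeartbeats 1000000 in
private lemma phi_bound {γ : ℝ} (hγ1 : 1 / 2 < γ) (hγ2 : γ ≤ 1) {φ Dk : ℝ} (hφ0 : 0 ≤ φ)
    (hφθ : φ ≤ 2 * Real.arccos (cstar γ)) (hroot : Ff γ φ = Dk) :
    φ ≤ 3 * π / (4 * (2 * γ - 1)) * Dk := by
  have hγ0 : (0:ℝ) < γ := by linarith
  set c := cstar γ with hc
  have hc0 := cstar_pos hγ1 hγ2
  have hc1 := cstar_lt_one hγ1 hγ2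
  have hrootc := cstar_root hγ1
  have h2g := cstar_2g hγ1 hγ2
  have hcsq := cstar_sq hγ1 hγ2
  set v := φ / 2 with hv
  have hv0 : 0 ≤ v := by positivity
  have hva : v ≤ Real.arccos c := by
    rw [hv]; linarith [hφθ]
  have hv4 : v ≤ π / 4 := le_trans hva (arccos_cstar_le hγ1 hγ2)
  have hcosv : c ≤ Real.cos v := by
    have h1 : Real.cos (Real.arccos c) ≤ Real.cos v :=
      Real.cos_le_cos_of_nonneg_of_le_pi hv0 (Real.arccos_le_pi _) hva
    rwa [Real.cos_arccos (by linarith) hc1.le] at h1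
  have hcosv0 : 0 < Real.cos v := lt_of_lt_of_le hc0 hcosv
  have hsinv0 : 0 ≤ Real.sin v :=
    Real.sin_nonneg_of_nonneg_of_le_pi hv0 (by linarith [Real.pi_pos])
  have hsv : v * Real.cos v ≤ Real.sin v := by
    rcases eq_or_lt_of_le hv0 with h | h
    · simp [← h]
    · have htan := Real.lt_tan h (by linarith [Real.pi_pos])
      rw [Real.tan_eq_sin_div_cos, lt_div_iff₀ hcosv0] at htan
      linarith
  have hid : c * (γ * c - (1 - γ)) = γ * (1 - c ^ 2) := by linear_combination hrootc
  have hγc : 0 ≤ γ * c - (1 - γ) := by nlinarith [hid, hc0, hc1]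
  have hγcv : 0 ≤ γ * Real.cos v - (1 - γ) := by nlinarith [hcosv, hγc, hγ0]
  have hF : Ff γ φ = 2 * Real.sin v * (γ * Real.cos v - (1 - γ)) := by
    rw [Ff, show φ = 2 * v by rw [hv]; ring, Real.sin_two_mul, show 2 * v / 2 = v by ring]
    ring
  have hDk0 : 0 ≤ Dk := by
    rw [← hroot, hF]
    positivity
  have e2 : c * (γ * c - (1 - γ)) ≤ Real.cos v * (γ * Real.cos v - (1 - γ)) := by
    nlinarith [mul_nonneg (sub_nonneg.2 hcosv)
      (show 0 ≤ γ * (Real.cos v + c) - (1 - γ) by nlinarith [hcosv, h2g, hc0])]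
  have e1 : v * (Real.cos v * (γ * Real.cos v - (1 - γ)))
      ≤ Real.sin v * (γ * Real.cos v - (1 - γ)) := by
    nlinarith [mul_le_mul_of_nonneg_right hsv hγcv]
  have hchain : φ * (γ * (1 - c ^ 2)) ≤ Dk := by
    have e4 : v * (c * (γ * c - (1 - γ))) ≤ v * (Real.cos v * (γ * Real.cos v - (1 - γ))) :=
      mul_le_mul_of_nonneg_left e2 hv0
    have e5 : φ * (γ * (1 - c ^ 2)) = 2 * (v * (c * (γ * c - (1 - γ)))) := by
      rw [← hid, show φ = 2 * v by rw [hv]; ring]; ring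
    rw [← hroot, hF, e5]
    nlinarith [e4, e1]
  have core : 4 * (2 * c + 1) ≤ 3 * π * ((1 + c) * c) := by
    nlinarith [Real.pi_gt_three, hcsq, hc0, hc1]
  have h6 : 4 * (2 * γ - 1) * c ≤ 3 * π * (γ * (1 - c ^ 2)) * c := by
    nlinarith [mul_nonneg (mul_nonneg hγ0.le (sub_nonneg.2 hc1.le)) (sub_nonneg.2 core), hrootc]
  have h7 : 4 * (2 * γ - 1) ≤ 3 * π * (γ * (1 - c ^ 2)) :=
    le_of_mul_le_mul_right (by linarith [h6]) hc0
  have hgc2 : 0 < γ * (1 - c ^ 2) := by nlinarith [hc0, hc1, hγ0]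
  have h8 : 1 / (γ * (1 - c ^ 2)) ≤ 3 * π / (4 * (2 * γ - 1)) := by
    rw [div_le_div_iff₀ hgc2 (by linarith : (0:ℝ) < 4 * (2 * γ - 1))]
    nlinarith [h7]
  calc φ ≤ Dk / (γ * (1 - c ^ 2)) := (le_div_iff₀ hgc2).mpr hchain
    _ = 1 / (γ * (1 - c ^ 2)) * Dk := by ring
    _ ≤ 3 * π / (4 * (2 * γ - 1)) * Dk := mul_le_mul_of_nonneg_right h8 hDk0

/-- A Kuramoto solution on `[0,∞)` (modeled as a function on ℝ whose ODE holds on `Set.Ici 0`). -/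
def IsKuramotoOn {N : ℕ} (κ : ℝ) (ν : Fin N → ℝ) (θ : ℝ → Fin N → ℝ) : Prop :=
  ∀ (i : Fin N), ∀ t ∈ Set.Ici (0 : ℝ), HasDerivWithinAt (fun s => θ s i)
    (ν i + κ / N * ∑ j, Real.sin (θ t j - θ t i)) (Set.Ici 0) t

set_option maxHeartbeats 2000000 in
/-- Corollary 3.1 (1)-(2): with `B = 𝒩`, the majority ensemble `A` is stable,
`limsup D(Θ_A(t)) ≤ φ₁ ≤ (3π/(4(2γ−1)))·D(Ω)/κ`, and the full phase diameter
stays bounded (hence asymptotic phase-locking). -/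
theorem majority_ensemble_complete_phase_locking (N : ℕ) (hN : 1 ≤ N) (κ γ ℓ : ℝ)
    (hγ₁ : 1 / 2 < γ) (hγ₂ : γ ≤ 1)
    (hℓ : ℓ ∈ Set.Ioo 0 (2 * Real.arccos ((1 - γ) / γ)))
    (ν : Fin N → ℝ) (A : Finset (Fin N))
    (hcard : γ * N ≤ (A.card : ℝ))
    (hκ : diam Finset.univ ν / (γ * Real.sin ℓ - 2 * (1 - γ) * Real.sin (ℓ / 2)) < κ)
    (θ : ℝ → Fin N → ℝ) (hθ : IsKuramotoOn κ ν θ)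
    (h0 : diam A (θ 0) ≤ ℓ)
    (θs φ₁ : ℝ)
    (hθs : θs = 2 * Real.arccos ((1 - γ + Real.sqrt ((1 - γ) ^ 2 + 8 * γ ^ 2)) / (4 * γ)))
    (hφ₁mem : φ₁ ∈ Set.Icc 0 θs)
    (hφ₁root : γ * Real.sin φ₁ - 2 * (1 - γ) * Real.sin (φ₁ / 2) = diam Finset.univ ν / κ) :
    ((∀ t ≥ (0 : ℝ), diam A (θ t) ≤ ℓ) ∧
      Filter.limsup (fun t => diam A (θ t)) Filter.atTop ≤ φ₁ ∧
      φ₁ ≤ 3 * Real.pi / (4 * (2 * γ - 1)) * (diam Finset.univ ν / κ)) ∧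
    (∃ M : ℝ, ∀ t ≥ (0 : ℝ), diam Finset.univ (θ t) ≤ M) := by
  classical
  obtain ⟨hℓ0, hℓub⟩ := hℓ
  have hγ0 : (0:ℝ) < γ := by linarith
  have hβ0 : (0:ℝ) ≤ 1 - γ := by linarith
  have hN1 : (1:ℝ) ≤ N := by exact_mod_cast hN
  have hNpos : (0:ℝ) < N := by linarith
  have hAne : A.Nonempty := by
    rw [← Finset.card_pos]
    by_contra h
    push_neg at h
    have h2 : A.card = 0 := by omega
    rw [h2] at hcard
    push_cast at hcard
    have := mul_pos hγ0 hNpos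
    linarith
  have hUne : (Finset.univ : Finset (Fin N)).Nonempty := ⟨⟨0, by omega⟩, Finset.mem_univ _⟩
  -- basic facts about ℓ
  have hr0 : (0:ℝ) ≤ (1 - γ) / γ := div_nonneg hβ0 hγ0.le
  have hr1 : (1 - γ) / γ < 1 := (div_lt_one hγ0).mpr (by linarith)
  have hacos2 : Real.arccos ((1 - γ) / γ) ≤ π / 2 := Real.arccos_le_pi_div_two.mpr hr0
  have hℓπ : ℓ < π := by linarith
  have hcosl2 : (1 - γ) / γ < Real.cos (ℓ / 2) := by
    have h1 : Real.cos (Real.arccos ((1 - γ) / γ)) < Real.cos (ℓ / 2) :=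
      Real.cos_lt_cos_of_nonneg_of_le_pi (by linarith) (Real.arccos_le_pi _) (by linarith)
    rwa [Real.cos_arccos (by linarith) hr1.le] at h1
  have hγcosl2 : 1 - γ < γ * Real.cos (ℓ / 2) := by
    have := (div_lt_iff₀ hγ0).mp hcosl2
    linarith
  have hsinl2 : 0 < Real.sin (ℓ / 2) :=
    Real.sin_pos_of_pos_of_lt_pi (by linarith) (by linarith [Real.pi_pos])
  have hsin2l : Real.sin ℓ = 2 * Real.sin (ℓ / 2) * Real.cos (ℓ / 2) := by
    have h1 := Real.sin_two_mul (ℓ / 2)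
    rw [show 2 * (ℓ / 2) = ℓ by ring] at h1
    linarith
  have hFl : 0 < γ * Real.sin ℓ - 2 * (1 - γ) * Real.sin (ℓ / 2) := by
    rw [hsin2l]
    linarith [mul_pos hsinl2 (sub_pos.2 hγcosl2)]
  have hDν0 : 0 ≤ diam Finset.univ ν := diam_nonneg _ hUne ν
  have hκpos : 0 < κ := lt_of_le_of_lt (div_nonneg hDν0 hFl.le) hκ
  have hDκ : diam Finset.univ ν < κ * (γ * Real.sin ℓ - 2 * (1 - γ) * Real.sin (ℓ / 2)) := by
    rw [div_lt_iff₀ hFl] at hκ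
    linarith
  -- setup for the fencing arguments
  set g : Fin N × Fin N → ℝ → ℝ := fun p t => θ t p.1 - θ t p.2 with hgdef
  set d : Fin N × Fin N → ℝ → ℝ := fun p t =>
    (ν p.1 + κ / N * ∑ k, Real.sin (θ t k - θ t p.1))
      - (ν p.2 + κ / N * ∑ k, Real.sin (θ t k - θ t p.2)) with hddef
  have hgderiv : ∀ (p : Fin N × Fin N), ∀ t ∈ Set.Ici (0:ℝ),
      HasDerivWithinAt (g p) (d p t) (Set.Ici t) t := by
    intro p t ht
    exact ((hθ p.1 t ht).sub (hθ p.2 t ht)).mono (Set.Ici_subset_Ici.mpr ht)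
  have hgcont : ∀ (p : Fin N × Fin N), ContinuousOn (g p) (Set.Ici (0:ℝ)) := by
    intro p t ht
    exact ((hθ p.1 t ht).sub (hθ p.2 t ht)).continuousWithinAt
  have hPne : (A ×ˢ A).Nonempty := hAne.product hAne
  have hdiam_eq : ∀ t, diam A (θ t) = (A ×ˢ A).sup' hPne (fun p => g p t) :=
    fun t => diam_eq_sup' A hAne (θ t)
  -- the key derivative estimate, adapted to our setting
  have hkey : ∀ (lam : ℝ) (nn : ℤ) (x : ℝ) (i j : Fin N), 0 < lam → lam ≤ ℓ →
      θ x i - θ x j = lam + 2 * π * nn →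
      ((∀ k ∈ A, θ x k - θ x j ∈ Set.Icc 0 lam) ∨ (∀ k ∈ A, θ x i - θ x k ∈ Set.Icc 0 lam)) →
      d (i, j) x ≤ diam Finset.univ ν
        - κ * (γ * Real.sin lam - 2 * (1 - γ) * Real.sin (lam / 2)) := by
    intro lam nn x i j hlam0 hlamℓ hij hcase
    exact key_bound hNpos hκpos ν A hcard hlam0.le (by linarith) hij hcase
  -- containment helper
  have hcontainL : ∀ (x lv : ℝ) (p : Fin N × Fin N), p ∈ A ×ˢ A →
      ((A ×ˢ A).sup' hPne (fun q => g q x)) = lv → g p x = lv →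
      ∀ k ∈ A, θ x k - θ x p.2 ∈ Set.Icc 0 lv := by
    intro x lv p hp hsup hpx k hk
    obtain ⟨hp1, hp2⟩ := Finset.mem_product.mp hp
    have h5 : g (p.1, k) x ≤ lv := by
      rw [← hsup]
      exact Finset.le_sup' (fun q => g q x) (b := (p.1, k)) (Finset.mem_product.mpr ⟨hp1, hk⟩)
    have h6 : g (k, p.2) x ≤ lv := by
      rw [← hsup]
      exact Finset.le_sup' (fun q => g q x) (b := (k, p.2)) (Finset.mem_product.mpr ⟨hk, hp2⟩)
    simp only [hgdef] at h5 h6 hpx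
    exact Set.mem_Icc.mpr ⟨by linarith, by linarith⟩
  -- Part (1a): stability of the ensemble A
  have key1 : ∀ t ≥ (0:ℝ), diam A (θ t) ≤ ℓ := by
    intro t ht
    have happ := sup'_le_linear hPne g d (a := 0) (b := t) (C := ℓ) (m := 0)
      (fun p _ x hx => hgderiv p x hx.1)
      (fun p _ => (hgcont p).mono Set.Icc_subset_Ici_self)
      (by rw [← hdiam_eq]; exact h0)
      ?_ t ⟨ht, le_refl t⟩
    · rw [hdiam_eq]
      simpa using happ
    · intro x hx hsup p hp hpx
      simp only [zero_mul, add_zero] at hsup hpx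
      have hcontain := hcontainL x ℓ p hp hsup hpx
      obtain ⟨hp1, hp2⟩ := Finset.mem_product.mp hp
      have hijx : θ x p.1 - θ x p.2 = ℓ + 2 * π * ((0:ℤ):ℝ) := by
        simp only [hgdef] at hpx
        push_cast
        linarith
      have hb := hkey ℓ 0 x p.1 p.2 hℓ0 le_rfl hijx (Or.inl hcontain)
      calc d p x = d (p.1, p.2) x := rfl
        _ ≤ diam Finset.univ ν - κ * (γ * Real.sin ℓ - 2 * (1 - γ) * Real.sin (ℓ / 2)) := hb
        _ < 0 := by linarith
  -- F-function preliminaries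
  have hθseq : θs = 2 * Real.arccos (cstar γ) := by rw [hθs, cstar]
  have hφ₁0 : (0:ℝ) ≤ φ₁ := hφ₁mem.1
  have hφ₁θ : φ₁ ≤ 2 * Real.arccos (cstar γ) := by rw [← hθseq]; exact hφ₁mem.2
  have hFroot : Ff γ φ₁ = diam Finset.univ ν / κ := hφ₁root
  have h1c : φ₁ ≤ 3 * π / (4 * (2 * γ - 1)) * (diam Finset.univ ν / κ) :=
    phi_bound hγ₁ hγ₂ hφ₁0 hφ₁θ hFroot
  have hFlF : Ff γ ℓ = γ * Real.sin ℓ - 2 * (1 - γ) * Real.sin (ℓ / 2) := rfl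
  have hFlgt : diam Finset.univ ν / κ < Ff γ ℓ := by
    rw [hFlF, div_lt_iff₀ hκpos]
    linarith
  have hFgt : ∀ a, φ₁ < a → a ≤ ℓ → diam Finset.univ ν / κ < Ff γ a := by
    intro a ha1 ha2
    by_cases haθ : a ≤ 2 * Real.arccos (cstar γ)
    · have := Ff_mono hγ₁ hγ₂ (Set.mem_Icc.mpr ⟨hφ₁0, hφ₁θ⟩)
        (Set.mem_Icc.mpr ⟨by linarith, haθ⟩) ha1
      rw [hFroot] at this
      exact this
    · push_neg at haθ
      rcases eq_or_lt_of_le ha2 with he | hlt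
      · rw [he]; exact hFlgt
      · have h2 := Ff_anti hγ₁ hγ₂ hℓπ (Set.mem_Icc.mpr ⟨haθ.le, ha2⟩)
          (Set.mem_Icc.mpr ⟨by linarith, le_rfl⟩) hlt
        linarith
  have hFmin : ∀ (a : ℝ), 0 ≤ a → ∀ x, a ≤ x → x ≤ ℓ → min (Ff γ a) (Ff γ ℓ) ≤ Ff γ x := by
    intro a ha0 x hax hxℓ
    by_cases hxθ : x ≤ 2 * Real.arccos (cstar γ)
    · refine le_trans (min_le_left _ _) ?_
      rcases eq_or_lt_of_le hax with he | hlt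
      · rw [he]
      · exact (Ff_mono hγ₁ hγ₂ (Set.mem_Icc.mpr ⟨ha0, by linarith⟩)
          (Set.mem_Icc.mpr ⟨by linarith, hxθ⟩) hlt).le
    · push_neg at hxθ
      refine le_trans (min_le_right _ _) ?_
      rcases eq_or_lt_of_le hxℓ with he | hlt
      · rw [he]
      · exact (Ff_anti hγ₁ hγ₂ hℓπ (Set.mem_Icc.mpr ⟨hxθ.le, hxℓ⟩)
          (Set.mem_Icc.mpr ⟨by linarith, le_rfl⟩) hlt).le
  -- Part (1b): eventual bound by φ₁ + ε
  have key2 : ∀ ε > (0:ℝ), ∃ T : ℝ, 0 ≤ T ∧ ∀ t ≥ T, diam A (θ t) ≤ φ₁ + ε := by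
    intro ε hε
    by_cases hcase : ℓ ≤ φ₁ + ε
    · exact ⟨0, le_rfl, fun t ht => le_trans (key1 t ht) hcase⟩
    · push_neg at hcase
      set a := φ₁ + ε with hadef
      have ha0 : 0 < a := by rw [hadef]; linarith
      have haℓ : a < ℓ := hcase
      have hFa : diam Finset.univ ν / κ < Ff γ a := hFgt a (by rw [hadef]; linarith) haℓ.le
      set mF := min (Ff γ a) (Ff γ ℓ) with hmF
      have hmFgt : diam Finset.univ ν / κ < mF := lt_min hFa hFlgt
      have hδ' : 0 < κ * mF - diam Finset.univ ν := by
        rw [div_lt_iff₀ hκpos] at hmFgt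
        linarith
      set δ := (κ * mF - diam Finset.univ ν) / 2 with hδdef
      have hδ0 : 0 < δ := by rw [hδdef]; linarith
      set T := (ℓ - a) / δ with hT
      have hT0 : 0 ≤ T := le_of_lt (div_pos (by linarith) hδ0)
      have hdecay : (A ×ˢ A).sup' hPne (fun p => g p T) ≤ a := by
        have happ := sup'_le_linear hPne g d (a := 0) (b := T) (C := ℓ) (m := -δ)
          (fun p _ x hx => hgderiv p x hx.1)
          (fun p _ => (hgcont p).mono Set.Icc_subset_Ici_self)
          (by rw [← hdiam_eq]; exact h0) ?_ T ⟨hT0, le_rfl⟩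
        · have h9 : δ * ((ℓ - a) / δ) = ℓ - a := by
            field_simp
          have he : ℓ + -δ * (T - 0) = a := by
            rw [hT, sub_zero]
            linarith
          linarith [happ]
        · intro x hx hsup p hp hpx
          have hx0 : (0:ℝ) ≤ x := hx.1
          set b := ℓ + -δ * (x - 0) with hb
          have hbℓ : b ≤ ℓ := by
            have h9 : 0 ≤ δ * x := mul_nonneg hδ0.le hx0
            rw [hb]; linarith
          have hba : a < b := by
            have hxT : x < T := hx.2
            rw [hT, lt_div_iff₀ hδ0] at hxT
            rw [hb]
            linarith
          have hcontain := hcontainL x b p hp hsup hpx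
          obtain ⟨hp1, hp2⟩ := Finset.mem_product.mp hp
          have hijx : θ x p.1 - θ x p.2 = b + 2 * π * ((0:ℤ):ℝ) := by
            simp only [hgdef] at hpx
            push_cast
            linarith
          have hbd := hkey b 0 x p.1 p.2 (by linarith) hbℓ hijx (Or.inl hcontain)
          have hFb : mF ≤ Ff γ b := hFmin a ha0.le b hba.le hbℓ
          have hFbe : Ff γ b = γ * Real.sin b - 2 * (1 - γ) * Real.sin (b / 2) := rfl
          calc d p x = d (p.1, p.2) x := rfl
            _ ≤ diam Finset.univ ν - κ * (γ * Real.sin b - 2 * (1 - γ) * Real.sin (b / 2)) := hbd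
            _ ≤ diam Finset.univ ν - κ * mF := by
                have h9 : κ * mF ≤ κ * Ff γ b := mul_le_mul_of_nonneg_left hFb hκpos.le
                rw [← hFbe]
                linarith
            _ < -δ := by rw [hδdef]; linarith
      have hstay : ∀ t ≥ T, (A ×ˢ A).sup' hPne (fun p => g p t) ≤ a := by
        intro t ht
        have happ := sup'_le_linear hPne g d (a := T) (b := t) (C := a) (m := 0)
          (fun p _ x hx => hgderiv p x (le_trans hT0 hx.1))
          (fun p _ => (hgcont p).mono (fun y hy => le_trans hT0 hy.1))
          hdecay ?_ t ⟨ht, le_rfl⟩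
        · simpa using happ
        · intro x hx hsup p hp hpx
          have hx0 : (0:ℝ) ≤ x := le_trans hT0 hx.1
          simp only [zero_mul, add_zero] at hsup hpx
          have hcontain := hcontainL x a p hp hsup hpx
          obtain ⟨hp1, hp2⟩ := Finset.mem_product.mp hp
          have hijx : θ x p.1 - θ x p.2 = a + 2 * π * ((0:ℤ):ℝ) := by
            simp only [hgdef] at hpx
            push_cast
            linarith
          have hbd := hkey a 0 x p.1 p.2 ha0 haℓ.le hijx (Or.inl hcontain)
          have hFa' : mF ≤ Ff γ a := min_le_left _ _
          have hFae : Ff γ a = γ * Real.sin a - 2 * (1 - γ) * Real.sin (a / 2) := rfl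
          calc d p x = d (p.1, p.2) x := rfl
            _ ≤ diam Finset.univ ν - κ * (γ * Real.sin a - 2 * (1 - γ) * Real.sin (a / 2)) := hbd
            _ ≤ diam Finset.univ ν - κ * mF := by
                have h9 : κ * mF ≤ κ * Ff γ a := mul_le_mul_of_nonneg_left hFa' hκpos.le
                rw [← hFae]
                linarith
            _ < 0 := by linarith
      exact ⟨T, hT0, fun t ht => by rw [hdiam_eq]; exact hstay t ht⟩
  have hlimsup : Filter.limsup (fun t => diam A (θ t)) Filter.atTop ≤ φ₁ := by
    apply le_of_forall_pos_le_add
    intro ε hε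
    obtain ⟨T, hT0, hT⟩ := key2 ε hε
    apply Filter.limsup_le_of_le
    · exact Filter.isCoboundedUnder_le_of_le Filter.atTop
        (x := 0) (fun t => diam_nonneg A hAne (θ t))
    · filter_upwards [Filter.eventually_ge_atTop T] with t ht
      exact hT t ht
  -- Part (2): boundedness of the full diameter
  obtain ⟨k₀, hk₀⟩ := hAne
  have h2π : 0 < 2 * π := by linarith [Real.pi_pos]
  have hbound_each : ∀ i : Fin N, ∃ c0 : ℝ, ∀ t ≥ (0:ℝ), |θ t i - θ t k₀| ≤ c0 := by
    intro i
    -- upper ensemble: indices {i} ×ˢ A, functions θ t i - θ t k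
    have hPu : (({i} : Finset (Fin N)) ×ˢ A).Nonempty :=
      ⟨(i, k₀), Finset.mem_product.mpr ⟨Finset.mem_singleton_self i, hk₀⟩⟩
    have hPd : (A ×ˢ ({i} : Finset (Fin N))).Nonempty :=
      ⟨(k₀, i), Finset.mem_product.mpr ⟨hk₀, Finset.mem_singleton_self i⟩⟩
    obtain ⟨n₁, hn₁⟩ := exists_nat_ge
      (((({i} : Finset (Fin N)) ×ˢ A).sup' hPu (fun p => g p 0) - ℓ) / (2 * π))
    obtain ⟨n₂, hn₂⟩ := exists_nat_ge
      (((A ×ˢ ({i} : Finset (Fin N))).sup' hPd (fun p => g p 0) - ℓ) / (2 * π))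
    have hL₁ : (({i} : Finset (Fin N)) ×ˢ A).sup' hPu (fun p => g p 0) ≤ ℓ + 2 * π * n₁ := by
      rw [div_le_iff₀ h2π] at hn₁
      linarith
    have hL₂ : (A ×ˢ ({i} : Finset (Fin N))).sup' hPd (fun p => g p 0) ≤ ℓ + 2 * π * n₂ := by
      rw [div_le_iff₀ h2π] at hn₂
      linarith
    have hup : ∀ t ≥ (0:ℝ), (({i} : Finset (Fin N)) ×ˢ A).sup' hPu (fun p => g p t)
        ≤ ℓ + 2 * π * n₁ := by
      intro t ht
      have happ := sup'_le_linear hPu g d (a := 0) (b := t) (C := ℓ + 2 * π * n₁) (m := 0)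
        (fun p _ x hx => hgderiv p x hx.1)
        (fun p _ => (hgcont p).mono Set.Icc_subset_Ici_self)
        hL₁ ?_ t ⟨ht, le_refl t⟩
      · simpa using happ
      · intro x hx hsup p hp hpx
        have hx0 : (0:ℝ) ≤ x := hx.1
        simp only [zero_mul, add_zero] at hsup hpx
        obtain ⟨hp1, hp2⟩ := Finset.mem_product.mp hp
        have hp1' : p.1 = i := Finset.mem_singleton.mp hp1
        have hcontain : ∀ k ∈ A, θ x k - θ x p.2 ∈ Set.Icc 0 ℓ := by
          intro k hk
          have h5 : g (p.1, k) x ≤ ℓ + 2 * π * n₁ := by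
            rw [← hsup]
            exact Finset.le_sup' (fun q => g q x) (b := (p.1, k))
              (Finset.mem_product.mpr ⟨hp1, hk⟩)
          have h6 : θ x k - θ x p.2 ≤ diam A (θ x) :=
            sub_le_diam A (θ x) hk hp2
          simp only [hgdef] at h5 hpx
          refine Set.mem_Icc.mpr ⟨by linarith, le_trans h6 (key1 x hx0)⟩
        have hijx : θ x p.1 - θ x p.2 = ℓ + 2 * π * ((n₁:ℤ):ℝ) := by
          simp only [hgdef] at hpx
          push_cast
          linarith
        have hbd := hkey ℓ n₁ x p.1 p.2 hℓ0 le_rfl hijx (Or.inl hcontain)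
        calc d p x = d (p.1, p.2) x := rfl
          _ ≤ diam Finset.univ ν - κ * (γ * Real.sin ℓ - 2 * (1 - γ) * Real.sin (ℓ / 2)) := hbd
          _ < 0 := by linarith
    have hdn : ∀ t ≥ (0:ℝ), (A ×ˢ ({i} : Finset (Fin N))).sup' hPd (fun p => g p t)
        ≤ ℓ + 2 * π * n₂ := by
      intro t ht
      have happ := sup'_le_linear hPd g d (a := 0) (b := t) (C := ℓ + 2 * π * n₂) (m := 0)
        (fun p _ x hx => hgderiv p x hx.1)
        (fun p _ => (hgcont p).mono Set.Icc_subset_Ici_self)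
        hL₂ ?_ t ⟨ht, le_refl t⟩
      · simpa using happ
      · intro x hx hsup p hp hpx
        have hx0 : (0:ℝ) ≤ x := hx.1
        simp only [zero_mul, add_zero] at hsup hpx
        obtain ⟨hp1, hp2⟩ := Finset.mem_product.mp hp
        have hp2' : p.2 = i := Finset.mem_singleton.mp hp2
        have hcontain : ∀ k ∈ A, θ x p.1 - θ x k ∈ Set.Icc 0 ℓ := by
          intro k hk
          have h5 : g (k, p.2) x ≤ ℓ + 2 * π * n₂ := by
            rw [← hsup]
            exact Finset.le_sup' (fun q => g q x) (b := (k, p.2))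
              (Finset.mem_product.mpr ⟨hk, hp2⟩)
          have h6 : θ x p.1 - θ x k ≤ diam A (θ x) :=
            sub_le_diam A (θ x) hp1 hk
          simp only [hgdef] at h5 hpx
          refine Set.mem_Icc.mpr ⟨by linarith, le_trans h6 (key1 x hx0)⟩
        have hijx : θ x p.1 - θ x p.2 = ℓ + 2 * π * ((n₂:ℤ):ℝ) := by
          simp only [hgdef] at hpx
          push_cast
          linarith
        have hbd := hkey ℓ n₂ x p.1 p.2 hℓ0 le_rfl hijx (Or.inr hcontain)
        calc d p x = d (p.1, p.2) x := rfl
          _ ≤ diam Finset.univ ν - κ * (γ * Real.sin ℓ - 2 * (1 - γ) * Real.sin (ℓ / 2)) := hbd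
          _ < 0 := by linarith
    refine ⟨max (ℓ + 2 * π * n₁) (ℓ + 2 * π * n₂), fun t ht => ?_⟩
    rw [abs_le]
    constructor
    · have h5 : θ t k₀ - θ t i ≤ ℓ + 2 * π * n₂ := by
        have := Finset.le_sup' (fun p => g p t) (b := (k₀, i))
          (Finset.mem_product.mpr ⟨hk₀, Finset.mem_singleton_self i⟩)
        exact le_trans this (hdn t ht)
      have h6 : ℓ + 2 * π * n₂ ≤ max (ℓ + 2 * π * n₁) (ℓ + 2 * π * n₂) := le_max_right _ _
      linarith
    · have h5 : θ t i - θ t k₀ ≤ ℓ + 2 * π * n₁ := by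
        have := Finset.le_sup' (fun p => g p t) (b := (i, k₀))
          (Finset.mem_product.mpr ⟨Finset.mem_singleton_self i, hk₀⟩)
        exact le_trans this (hup t ht)
      have h6 : ℓ + 2 * π * n₁ ≤ max (ℓ + 2 * π * n₁) (ℓ + 2 * π * n₂) := le_max_left _ _
      linarith
  choose C0 hC0 using hbound_each
  refine ⟨⟨key1, hlimsup, h1c⟩, ⟨2 * Finset.univ.sup' hUne C0, ?_⟩⟩
  intro t ht
  apply diam_le _ hUne
  intro i _ j _
  have h1 := hC0 i t ht
  have h2 := hC0 j t ht
  have h3 : C0 i ≤ Finset.univ.sup' hUne C0 := Finset.le_sup' C0 (Finset.mem_univ i)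
  have h4 : C0 j ≤ Finset.univ.sup' hUne C0 := Finset.le_sup' C0 (Finset.mem_univ j)
  rw [abs_le] at h1 h2
  linarith [h1.1, h1.2, h2.1, h2.2]
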